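/- For every k ≥ 2, the readability of the Hadamard graph H_k satisfies r(H_k) ≥ 2^{k−2} + 1 = n/4 + 1, where n = 2^k. -/

import Mathlib

namespace Readability

/-- `x` overlaps `y` by `i`: `1 ≤ i ≤ min |x| |y|` and the length-`i` suffix of `x`
equals the length-`i` prefix of `y`. -/
def OverlapsBy {α : Type*} (x y : List α) (i : ℕ) : Prop :=
  1 ≤ i ∧ i ≤ min x.length y.length ∧ x.drop (x.length - i) = y.take i

/-- `ov x y`: the minimum `i` such that `x` overlaps `y` by `i`, or `0` if none exists. -/
noncomputable def ov {α : Type*} (x y : List α) : ℕ := sInf {i | OverlapsBy x y i}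

/-- An overlap labeling of length `r` of the bipartite graph with parts `Vs`, `Vp` and
edge relation `E ⊆ Vs × Vp`. -/
def IsOverlapLabeling {α Vs Vp : Type*} (E : Vs → Vp → Prop) (r : ℕ)
    (ls : Vs → List α) (lp : Vp → List α) : Prop :=
  (∀ u, (ls u).length = r) ∧ (∀ v, (lp v).length = r) ∧
    ∀ u v, E u v ↔ ∃ i, OverlapsBy (ls u) (lp v) i

/-- Bipartite readability: the least `r` admitting an overlap labeling of length `r`
(over the alphabet `ℕ`). -/
noncomputable def bReadability {Vs Vp : Type*} (E : Vs → Vp → Prop) : ℕ :=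
  sInf {r | ∃ (ls : Vs → List ℕ) (lp : Vp → List ℕ), IsOverlapLabeling E r ls lp}

/-- An injective overlap labeling of length `r` of the digraph with arc relation `A`. -/
def IsInjOverlapLabeling {V : Type*} (A : V → V → Prop) (r : ℕ) (ℓ : V → List ℕ) : Prop :=
  (∀ v, (ℓ v).length = r) ∧ Function.Injective ℓ ∧
    ∀ u v, A u v ↔ 0 < ov (ℓ u) (ℓ v) ∧ ov (ℓ u) (ℓ v) < r

/-- Digraph readability: the least `r` admitting an injective overlap labeling of length `r`. -/
noncomputable def dReadability {V : Type*} (A : V → V → Prop) : ℕ :=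
  sInf {r | ∃ ℓ : V → List ℕ, IsInjOverlapLabeling A r ℓ}

/-- A decomposition of size `k`: a weight function on edges with values in `{1,…,k}`. -/
def IsDecomposition {Vs Vp : Type*} (E : Vs → Vp → Prop) (k : ℕ) (w : Vs → Vp → ℕ) : Prop :=
  ∀ u v, E u v → 1 ≤ w u v ∧ w u v ≤ k

/-- An induced `P₄` with consecutive edges `(s1,p1), (s2,p1), (s2,p2)`. -/
def InducedP4 {Vs Vp : Type*} (E : Vs → Vp → Prop) (s1 s2 : Vs) (p1 p2 : Vp) : Prop :=
  s1 ≠ s2 ∧ p1 ≠ p2 ∧ E s1 p1 ∧ E s2 p1 ∧ E s2 p2 ∧ ¬ E s1 p2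

/-- The `P₄`-rule: on each induced `P₄`, if the middle edge has maximum weight then its weight
is at least the sum of the weights of the two outer edges. -/
def SatisfiesP4Rule {Vs Vp : Type*} (E : Vs → Vp → Prop) (w : Vs → Vp → ℕ) : Prop :=
  ∀ s1 s2 p1 p2, InducedP4 E s1 s2 p1 p2 →
    w s2 p1 = max (w s1 p1) (max (w s2 p1) (w s2 p2)) →
    w s1 p1 + w s2 p2 ≤ w s2 p1

/-- The strict `P₄`-rule: as the `P₄`-rule, with strict inequality. -/
def SatisfiesStrictP4Rule {Vs Vp : Type*} (E : Vs → Vp → Prop) (w : Vs → Vp → ℕ) : Prop :=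
  ∀ s1 s2 p1 p2, InducedP4 E s1 s2 p1 p2 →
    w s2 p1 = max (w s1 p1) (max (w s2 p1) (w s2 p2)) →
    w s1 p1 + w s2 p2 < w s2 p1

/-- `C₄`-freeness of a bipartite graph. -/
def C4Free {Vs Vp : Type*} (E : Vs → Vp → Prop) : Prop :=
  ∀ (s1 s2 : Vs) (p1 p2 : Vp), s1 ≠ s2 → p1 ≠ p2 →
    ¬ (E s1 p1 ∧ E s1 p2 ∧ E s2 p1 ∧ E s2 p2)

/-- The subgraph `G_i` of a decomposition: edges of weight exactly `i`. -/
def SubAt {Vs Vp : Type*} (E : Vs → Vp → Prop) (w : Vs → Vp → ℕ) (i : ℕ) :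
    Vs → Vp → Prop :=
  fun u v => E u v ∧ w u v = i

/-- A bipartite edge relation is a disjoint union of bicliques iff it has no induced `P₄`,
i.e. whenever `(s1,p1), (s2,p1), (s2,p2)` are edges, so is `(s1,p2)`. -/
def BicliqueUnion {Vs Vp : Type*} (H : Vs → Vp → Prop) : Prop :=
  ∀ s1 s2 p1 p2, H s1 p1 → H s2 p1 → H s2 p2 → H s1 p2

/-- The HUB-rule for a decomposition `w`:
(i) every level graph `G_i` is a disjoint union of bicliques, and
(ii) non-isolated twins in `G_i` (for `i ≥ 2`) are twins in every `G_j` with `1 ≤ j ≤ i-1`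
(stated for both parts of the bipartition). -/
def SatisfiesHUBRule {Vs Vp : Type*} (E : Vs → Vp → Prop) (w : Vs → Vp → ℕ) : Prop :=
  (∀ i, 1 ≤ i → BicliqueUnion (SubAt E w i)) ∧
  (∀ i, 2 ≤ i → ∀ u v : Vs, u ≠ v → (∃ p, SubAt E w i u p) →
      (∀ p, SubAt E w i u p ↔ SubAt E w i v p) →
      ∀ j, 1 ≤ j → j ≤ i - 1 → ∀ p, SubAt E w j u p ↔ SubAt E w j v p) ∧
  (∀ i, 2 ≤ i → ∀ u v : Vp, u ≠ v → (∃ s, SubAt E w i s u) →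
      (∀ s, SubAt E w i s u ↔ SubAt E w i s v) →
      ∀ j, 1 ≤ j → j ≤ i - 1 → ∀ s, SubAt E w j s u ↔ SubAt E w j s v)

/-- The HUB number: minimum size of a decomposition satisfying the HUB-rule. -/
noncomputable def hubNumber {Vs Vp : Type*} (E : Vs → Vp → Prop) : ℕ :=
  sInf {k | ∃ w, IsDecomposition E k w ∧ SatisfiesHUBRule E w}

/-- The underlying undirected simple graph on `Vs ⊕ Vp` of a bipartite graph. -/
def underlyingGraph {Vs Vp : Type*} (E : Vs → Vp → Prop) : SimpleGraph (Vs ⊕ Vp) where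
  Adj x y := (∃ u v, x = Sum.inl u ∧ y = Sum.inr v ∧ E u v) ∨
    (∃ u v, x = Sum.inr v ∧ y = Sum.inl u ∧ E u v)
  symm := by
    constructor
    rintro x y (⟨u, v, rfl, rfl, h⟩ | ⟨u, v, rfl, rfl, h⟩)
    · exact Or.inr ⟨u, v, rfl, rfl, h⟩
    · exact Or.inl ⟨u, v, rfl, rfl, h⟩
  loopless := by
    constructor
    rintro x (⟨u, v, h1, h2, -⟩ | ⟨u, v, h1, h2, -⟩) <;> subst h1 <;> simp_all

/-- The radius of a graph: the least `r` such that some vertex has eccentricity at most `r`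
(for a finite connected graph this is `min_u max_v dist(u,v)`). -/
noncomputable def graphRadius {V : Type*} (G : SimpleGraph V) : ℕ :=
  sInf {r | ∃ u, ∀ v, G.dist u v ≤ r}

/-- Distinctness of two vertices `u, v` of the same part (here the `Vs`-part, with
neighborhoods taken in `Vp`): `max(|N(u)∖N(v)|, |N(v)∖N(u)|)`. -/
noncomputable def DTpair {Vs Vp : Type*} (E : Vs → Vp → Prop) (u v : Vs) : ℕ :=
  max {p : Vp | E u p ∧ ¬ E v p}.ncard {p : Vp | E v p ∧ ¬ E u p}.ncard

/-- Distinctness of a bipartite graph: the minimum of `DT(u,v)` over pairs of distinct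
vertices in the same part. -/
noncomputable def distinctness {Vs Vp : Type*} (E : Vs → Vp → Prop) : ℕ :=
  sInf ({d | ∃ u v : Vs, u ≠ v ∧ d = DTpair E u v} ∪
        {d | ∃ u v : Vp, u ≠ v ∧ d = DTpair (fun p s => E s p) u v})

/-- A bipartite graph fails to be a matching iff some vertex has degree at least 2. -/
def NotMatching {Vs Vp : Type*} (E : Vs → Vp → Prop) : Prop :=
  (∃ u : Vs, ∃ p1 p2 : Vp, p1 ≠ p2 ∧ E u p1 ∧ E u p2) ∨
  (∃ p : Vp, ∃ u1 u2 : Vs, u1 ≠ u2 ∧ E u1 p ∧ E u2 p)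

/-! ### Auxiliary lemmas for `statement17` -/

private lemma overlap_append_low' {α : Type*} {P X Y S : List α} {r i : ℕ}
    (hP : P.length = r) (hX : X.length = r) (hY : Y.length = r) (hS : S.length = r)
    (hi : i ≤ r) : OverlapsBy (P ++ X) (Y ++ S) i ↔ OverlapsBy X Y i := by
  unfold OverlapsBy
  have hlen : (P ++ X).length = r + r := by simp [hP, hX]
  have hlen2 : (Y ++ S).length = r + r := by simp [hY, hS]
  have hd : (P ++ X).drop ((P ++ X).length - i) = X.drop (X.length - i) := by
    rw [hlen, List.drop_append, List.drop_eq_nil_of_le (by omega),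
      List.nil_append, hP, hX]
    congr 1; omega
  have ht : (Y ++ S).take i = Y.take i := by
    rw [List.take_append, hY, Nat.sub_eq_zero_of_le hi, List.take_zero,
      List.append_nil]
  rw [hd, ht, hlen, hlen2, hX, hY]
  constructor
  · rintro ⟨h1, h2, h3⟩; exact ⟨h1, by omega, h3⟩
  · rintro ⟨h1, h2, h3⟩; exact ⟨h1, by omega, h3⟩

private lemma overlap_append_high' {α : Type*} {P X Y S : List α} {r i : ℕ}
    (hP : P.length = r) (hX : X.length = r) (hY : Y.length = r) (hS : S.length = r)
    (hlo : r < i) (hhi : i ≤ r + r) :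
    OverlapsBy (P ++ X) (Y ++ S) i ↔ P.drop (r - (i - r)) ++ X = Y ++ S.take (i - r) := by
  unfold OverlapsBy
  have hlen : (P ++ X).length = r + r := by simp [hP, hX]
  have hlen2 : (Y ++ S).length = r + r := by simp [hY, hS]
  have hd : (P ++ X).drop ((P ++ X).length - i) = P.drop (r - (i - r)) ++ X := by
    rw [hlen, List.drop_append, hP]
    have h0 : r + r - i - r = 0 := by omega
    rw [h0, List.drop_zero]
    congr 2; omega
  have ht : (Y ++ S).take i = Y ++ S.take (i - r) := by
    rw [List.take_append, List.take_of_length_le (by omega), hY]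
  rw [hd, ht, hlen, hlen2]
  constructor
  · rintro ⟨_, _, h3⟩; exact h3
  · intro h3; exact ⟨by omega, by omega, h3⟩

private lemma exists_labeling_finset {Vs Vp : Type*} [Fintype Vs] [Fintype Vp]
    [DecidableEq Vs] [DecidableEq Vp] (F : Finset (Vs × Vp)) :
    ∃ (r : ℕ) (ls : Vs → List ℕ) (lp : Vp → List ℕ),
      1 ≤ r ∧ IsOverlapLabeling (fun u v => (u, v) ∈ F) r ls lp := by
  classical
  induction F using Finset.induction_on with
  | empty =>
    refine ⟨1, fun u => [2 * (Fintype.equivFin Vs u : ℕ)],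
      fun v => [2 * (Fintype.equivFin Vp v : ℕ) + 1], le_refl 1, fun u => rfl, fun v => rfl,
      fun u v => ?_⟩
    simp only [Finset.notMem_empty, false_iff]
    rintro ⟨i, h1, h2, h3⟩
    simp only [List.length_singleton, min_self] at h2
    have hi : i = 1 := le_antisymm h2 h1
    subst hi
    simp only [List.drop, List.take] at h3
    have := List.head_eq_of_cons_eq h3
    omega
  | @insert ab F hab ih =>
    obtain ⟨a, b⟩ := ab
    obtain ⟨r, ls, lp, hr, hlens, hlenp, hiff⟩ := ih
    set L : Finset ℕ := (Finset.univ.biUnion fun u => (ls u).toFinset) ∪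
      (Finset.univ.biUnion fun v => (lp v).toFinset) with hL
    set c : ℕ := L.sup id + 1 with hc
    have hcs : ∀ u, c ∉ ls u := by
      intro u h
      have hmem : c ∈ L := by
        rw [hL]; apply Finset.mem_union_left
        exact Finset.mem_biUnion.2 ⟨u, Finset.mem_univ u, List.mem_toFinset.2 h⟩
      have := Finset.le_sup (f := id) hmem
      simp only [id] at this; omega
    have hcp : ∀ v, c ∉ lp v := by
      intro v h
      have hmem : c ∈ L := by
        rw [hL]; apply Finset.mem_union_right
        exact Finset.mem_biUnion.2 ⟨v, Finset.mem_univ v, List.mem_toFinset.2 h⟩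
      have := Finset.le_sup (f := id) hmem
      simp only [id] at this; omega
    set ls' : Vs → List ℕ := fun u =>
      (if u = a then lp b else List.replicate r c) ++ ls u with hls'
    set lp' : Vp → List ℕ := fun v =>
      lp v ++ (if v = b then ls a else List.replicate r c) with hlp'
    have hPlen : ∀ u, (if u = a then lp b else List.replicate r c).length = r := by
      intro u; split <;> simp [hlenp, hlens]
    have hSlen : ∀ v, (if v = b then ls a else List.replicate r c).length = r := by
      intro v; split <;> simp [hlenp, hlens]
    refine ⟨r + r, ls', lp', by omega, fun u => by simp [hls', hPlen u, hlens], fun v => by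
      simp [hlp', hSlen v, hlenp], fun u v => ?_⟩
    constructor
    · intro hmem
      rcases Finset.mem_insert.1 hmem with heq | hmem'
      · rw [Prod.ext_iff] at heq
        obtain ⟨hu, hv⟩ := heq
        simp only at hu hv
        subst hu; subst hv
        refine ⟨r + r, (overlap_append_high' (hPlen u) (hlens u) (hlenp v) (hSlen v)
          (by omega) (le_refl _)).2 ?_⟩
        rw [if_pos rfl, if_pos rfl, Nat.add_sub_cancel, Nat.sub_self, List.drop_zero,
          List.take_of_length_le (by rw [hlens])]
      · obtain ⟨i, hi⟩ := (hiff u v).1 hmem'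
        have hir : i ≤ r := le_trans hi.2.1 (by rw [hlens, hlenp]; omega)
        exact ⟨i, (overlap_append_low' (hPlen u) (hlens u) (hlenp v) (hSlen v) hir).2 hi⟩
    · rintro ⟨i, hi⟩
      rcases le_or_gt i r with hir | hir
      · exact Finset.mem_insert_of_mem
          ((hiff u v).2 ⟨i, (overlap_append_low' (hPlen u) (hlens u) (hlenp v) (hSlen v) hir).1 hi⟩)
      · have hi2 : i ≤ r + r := by
          have := hi.2.1
          rw [hls', hlp'] at this
          simp only [List.length_append, hPlen u, hSlen v, hlens, hlenp, min_self] at this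
          omega
        have heq := (overlap_append_high' (hPlen u) (hlens u) (hlenp v) (hSlen v) hir hi2).1 hi
        set t := i - r with hts
        have ht1 : 1 ≤ t := by omega
        have htr : t ≤ r := by omega
        by_cases hu : u = a
        · by_cases hv : v = b
          · subst hu; subst hv; exact Finset.mem_insert_self _ _
          · exfalso
            rw [if_pos hu, if_neg hv] at heq
            have hcongr := congrArg (fun l : List ℕ => l[t + (r-1)]?) heq
            have hlhs : ((lp b).drop (r - t) ++ ls u)[t + (r-1)]? = (ls u)[r-1]? := by
              rw [List.getElem?_append_right (by simp [hlenp]; omega)]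
              congr 1
              simp [hlenp]; omega
            have hrhs : (lp v ++ (List.replicate r c).take t)[t + (r-1)]? = some c := by
              rw [List.getElem?_append_right (by rw [hlenp]; omega)]
              rw [List.take_replicate]
              rw [List.getElem?_replicate_of_lt (by rw [hlenp]; omega)]
            rw [hlhs, hrhs] at hcongr
            have hlt : r - 1 < (ls u).length := by rw [hlens]; omega
            rw [List.getElem?_eq_getElem hlt] at hcongr
            have h2 := Option.some.inj hcongr
            exact hcs u (h2 ▸ List.getElem_mem hlt)
        · exfalso
          rw [if_neg hu] at heq
          have hcongr := congrArg (fun l : List ℕ => l[0]?) heq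
          have hlhs : ((List.replicate r c).drop (r - t) ++ ls u)[0]? = some c := by
            rw [List.drop_replicate]
            rw [List.getElem?_append_left (by simp [List.length_replicate]; omega)]
            exact List.getElem?_replicate_of_lt (by omega)
          have hrhs0 : 0 < (lp v).length := by rw [hlenp]; omega
          have hrhs : (lp v ++ (if v = b then ls a else List.replicate r c).take t)[0]? =
              some ((lp v)[0]'hrhs0) := by
            rw [List.getElem?_append_left hrhs0]
            exact List.getElem?_eq_getElem hrhs0
          rw [hlhs, hrhs] at hcongr
          have h2 := Option.some.inj hcongr
          exact hcp v (h2 ▸ List.getElem_mem hrhs0)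

private lemma exists_labeling {Vs Vp : Type*} [Fintype Vs] [Fintype Vp] (E : Vs → Vp → Prop) :
    ∃ (r : ℕ) (ls : Vs → List ℕ) (lp : Vp → List ℕ), IsOverlapLabeling E r ls lp := by
  classical
  obtain ⟨r, ls, lp, _, hlen1, hlen2, hiff⟩ :=
    exists_labeling_finset (Finset.univ.filter fun p : Vs × Vp => E p.1 p.2)
  refine ⟨r, ls, lp, hlen1, hlen2, fun u v => ?_⟩
  rw [← hiff u v]
  simp

private lemma card_dot' {k : ℕ} (w : Fin k → ZMod 2) (hw : w ≠ 0) (cc : ZMod 2) :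
    (Finset.univ.filter fun p : Fin k → ZMod 2 => (∑ i, w i * p i) = cc).card = 2 ^ (k - 1) := by
  classical
  obtain ⟨j, hj⟩ : ∃ j, w j ≠ 0 := by
    by_contra h
    push_neg at h
    exact hw (funext fun i => h i)
  have hj1 : w j = 1 := by
    revert hj; generalize w j = x; revert x; decide
  have hk1 : 1 ≤ k := j.pos.trans_le (by omega)
  set e : (Fin k → ZMod 2) → (Fin k → ZMod 2) := fun p => Function.update p j (p j + 1) with he
  have hsum : ∀ (p : Fin k → ZMod 2) (x : ZMod 2),
      ∑ i, w i * (Function.update p j x) i = w j * x + ∑ i ∈ Finset.univ.erase j, w i * p i := by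
    intro p x
    rw [← Finset.add_sum_erase _ _ (Finset.mem_univ j)]
    congr 1
    · rw [Function.update_self]
    · apply Finset.sum_congr rfl
      intro i hi
      rw [Function.update_of_ne (Finset.ne_of_mem_erase hi)]
  have hdot : ∀ p : Fin k → ZMod 2, (∑ i, w i * (e p) i) = (∑ i, w i * p i) + 1 := by
    intro p
    rw [he]
    simp only
    rw [hsum p (p j + 1), hj1, one_mul]
    rw [← Finset.add_sum_erase _ (fun i => w i * p i) (Finset.mem_univ j), hj1, one_mul]
    ring
  have hee : ∀ p, e (e p) = p := by
    intro p
    funext i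
    by_cases hij : i = j
    · subst hij
      simp [he, Function.update_self]
      generalize p i = x; revert x; decide
    · simp [he, Function.update_of_ne hij]
  have hcard : ∀ d : ZMod 2,
      (Finset.univ.filter fun p : Fin k → ZMod 2 => (∑ i, w i * p i) = d).card =
      (Finset.univ.filter fun p : Fin k → ZMod 2 => (∑ i, w i * p i) = d + 1).card := by
    intro d
    apply Finset.card_bij' (fun p _ => e p) (fun p _ => e p)
    · intro p hp
      simp only [Finset.mem_filter, Finset.mem_univ, true_and] at hp ⊢
      rw [hdot, hp]
    · intro p hp
      simp only [Finset.mem_filter, Finset.mem_univ, true_and] at hp ⊢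
      rw [hdot, hp]
      generalize d = x; revert x; decide
    · intro p _; exact hee p
    · intro p _; exact hee p
  have hsplit : (Finset.univ.filter fun p : Fin k → ZMod 2 => (∑ i, w i * p i) = cc) ∪
      (Finset.univ.filter fun p : Fin k → ZMod 2 => (∑ i, w i * p i) = cc + 1) = Finset.univ := by
    ext p
    simp only [Finset.mem_union, Finset.mem_filter, Finset.mem_univ, true_and, iff_true]
    generalize (∑ i, w i * p i) = x
    revert x; generalize cc = C; revert C; decide
  have hdisj : Disjoint
      (Finset.univ.filter fun p : Fin k → ZMod 2 => (∑ i, w i * p i) = cc)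
      (Finset.univ.filter fun p : Fin k → ZMod 2 => (∑ i, w i * p i) = cc + 1) := by
    rw [Finset.disjoint_left]
    intro p hp hp'
    simp only [Finset.mem_filter, Finset.mem_univ, true_and] at hp hp'
    rw [hp] at hp'
    revert hp'; generalize cc = C; revert C; decide
  have htot : (2:ℕ) ^ k = Fintype.card (Fin k → ZMod 2) := by
    rw [Fintype.card_fun]; simp
  have h2 : 2 ^ k = 2 * 2 ^ (k - 1) := by
    rw [← pow_succ']
    congr 1
    omega
  have hcu := Finset.card_union_of_disjoint hdisj
  rw [hsplit, Finset.card_univ, ← htot, ← hcard cc] at hcu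
  linarith

private lemma card_pattern {k : ℕ} (hk : 2 ≤ k) (u v : Fin k → ZMod 2)
    (hu : u ≠ 0) (hv : v ≠ 0) (huv : u ≠ v) :
    (Finset.univ.filter fun p : Fin k → ZMod 2 =>
      (∑ i, u i * p i) = 1 ∧ (∑ i, v i * p i) = 0).card = 2 ^ (k - 2) := by
  classical
  set du : (Fin k → ZMod 2) → ZMod 2 := fun p => ∑ i, u i * p i with hdu
  set dv : (Fin k → ZMod 2) → ZMod 2 := fun p => ∑ i, v i * p i with hdv
  set N : ZMod 2 → ZMod 2 → ℕ := fun a b =>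
    (Finset.univ.filter fun p => du p = a ∧ dv p = b).card with hN
  have hsplit : ∀ a : ZMod 2,
      (Finset.univ.filter fun p => du p = a).card = N a 0 + N a 1 := by
    intro a
    rw [hN]
    simp only
    rw [← Finset.card_union_of_disjoint]
    · congr 1
      ext p
      simp only [Finset.mem_filter, Finset.mem_union, Finset.mem_univ, true_and]
      constructor
      · intro h
        rcases (by generalize dv p = x; revert x; decide : dv p = 0 ∨ dv p = 1) with h0 | h1
        · exact Or.inl ⟨h, h0⟩
        · exact Or.inr ⟨h, h1⟩
      · rintro (⟨h, _⟩ | ⟨h, _⟩) <;> exact h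
    · rw [Finset.disjoint_left]
      rintro p hp hp'
      simp only [Finset.mem_filter, Finset.mem_univ, true_and] at hp hp'
      rw [hp.2] at hp'
      exact absurd hp'.2 (by decide)
  have hsplitv : ∀ b : ZMod 2,
      (Finset.univ.filter fun p => dv p = b).card = N 0 b + N 1 b := by
    intro b
    rw [hN]
    simp only
    rw [← Finset.card_union_of_disjoint]
    · congr 1
      ext p
      simp only [Finset.mem_filter, Finset.mem_union, Finset.mem_univ, true_and]
      constructor
      · intro h
        rcases (by generalize du p = x; revert x; decide : du p = 0 ∨ du p = 1) with h0 | h1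
        · exact Or.inl ⟨h0, h⟩
        · exact Or.inr ⟨h1, h⟩
      · rintro (⟨_, h⟩ | ⟨_, h⟩) <;> exact h
    · rw [Finset.disjoint_left]
      rintro p hp hp'
      simp only [Finset.mem_filter, Finset.mem_univ, true_and] at hp hp'
      rw [hp.1] at hp'
      exact absurd hp'.1 (by decide)
  have e1 : N 1 0 + N 1 1 = 2 ^ (k - 1) := by rw [← hsplit 1, card_dot' u hu 1]
  have e2 : N 0 1 + N 1 1 = 2 ^ (k - 1) := by rw [← hsplitv 1, card_dot' v hv 1]
  have huv0 : u + v ≠ 0 := by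
    intro h
    apply huv
    funext i
    have hcf := congrFun h i
    simp only [Pi.add_apply, Pi.zero_apply] at hcf
    revert hcf
    generalize u i = x; generalize v i = y; revert x y; decide
  have hduv : ∀ p, (∑ i, (u + v) i * p i) = du p + dv p := by
    intro p
    rw [hdu, hdv]
    simp only [Pi.add_apply, add_mul]
    rw [Finset.sum_add_distrib]
  have e3 : N 1 0 + N 0 1 = 2 ^ (k - 1) := by
    have hcd := card_dot' (u + v) huv0 1
    rw [← hcd]
    rw [hN]
    simp only
    rw [← Finset.card_union_of_disjoint]
    · congr 1
      ext p
      simp only [Finset.mem_filter, Finset.mem_union, Finset.mem_univ, true_and, hduv p]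
      generalize du p = x; generalize dv p = y
      revert x y; decide
    · rw [Finset.disjoint_left]
      rintro p hp hp'
      simp only [Finset.mem_filter, Finset.mem_univ, true_and] at hp hp'
      rw [hp.1] at hp'
      exact absurd hp'.1 (by decide)
  have h2 : (2:ℕ) ^ (k - 1) = 2 * 2 ^ (k - 2) := by
    rw [← pow_succ']
    congr 1; omega
  have hfin : N 1 0 = 2 ^ (k - 2) := by linarith
  rw [hN] at hfin
  simpa [hdu, hdv] using hfin

private lemma card_pattern_subtype {k : ℕ} (hk : 2 ≤ k)
    (u v : {x : Fin k → ZMod 2 // x ≠ 0}) (huv : u ≠ v) :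
    2 ^ (k - 2) ≤ (Finset.univ.filter fun p : {x : Fin k → ZMod 2 // x ≠ 0} =>
      (∑ i, u.1 i * p.1 i) = 1 ∧ ¬ (∑ i, v.1 i * p.1 i) = 1).card := by
  classical
  have hne : u.1 ≠ v.1 := fun h => huv (Subtype.ext h)
  have hnz : ∀ p : Fin k → ZMod 2, (∑ i, u.1 i * p i) = 1 → p ≠ 0 := by
    intro p h hp0
    rw [hp0] at h
    simp only [Pi.zero_apply, mul_zero, Finset.sum_const_zero] at h
    exact absurd h (by decide)
  rw [← card_pattern hk u.1 v.1 u.2 v.2 hne]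
  apply Finset.card_le_card_of_injOn
    (fun p => if h : p = 0 then u else ⟨p, h⟩)
  · intro p hp
    simp only [Finset.mem_coe, Finset.mem_filter, Finset.mem_univ, true_and] at hp ⊢
    rw [dif_neg (hnz p hp.1)]
    refine ⟨hp.1, ?_⟩
    rw [hp.2]; decide
  · intro p hp q hq h
    simp only [Finset.mem_coe, Finset.mem_filter, Finset.mem_univ, true_and] at hp hq
    simp only [dif_neg (hnz p hp.1), dif_neg (hnz q hq.1)] at h
    exact congrArg Subtype.val h

private lemma overlaps_congr_take {α : Type*} {y1 y2 x : List α} {i j : ℕ}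
    (hlen : y1.length = y2.length) (ht : y1.take i = y2.take i) (hj : j ≤ i) :
    OverlapsBy x y1 j ↔ OverlapsBy x y2 j := by
  have htj : y1.take j = y2.take j := by
    rw [← min_eq_left hj, ← List.take_take, ht, List.take_take, min_eq_left hj]
  unfold OverlapsBy
  rw [hlen, htj]

private lemma overlaps_congr_drop {α : Type*} {x1 x2 y : List α} {r i j : ℕ}
    (h1 : x1.length = r) (h2 : x2.length = r)
    (hd : x1.drop (r - i) = x2.drop (r - i)) (hj : j ≤ i) (hi : i ≤ r) :
    OverlapsBy x1 y j ↔ OverlapsBy x2 y j := by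
  have hdj : x1.drop (r - j) = x2.drop (r - j) := by
    have e : ∀ z : List α, z.length = r → z.drop (r - j) = (z.drop (r - i)).drop (i - j) := by
      intro z hz
      rw [List.drop_drop]
      congr 1
      omega
    rw [e x1 h1, e x2 h2, hd]
  unfold OverlapsBy
  rw [h1, h2, hdj]

/-- For `k ≥ 2`, the readability of the Hadamard graph `H_k` (parts: nonzero
vectors of `(ZMod 2)^k`, edges: odd inner product) is at least `2^{k−2} + 1 = n/4 + 1`. -/
theorem statement17 (k : ℕ) (hk : 2 ≤ k) :
    2 ^ (k - 2) + 1 ≤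
      bReadability (fun (u v : {x : Fin k → ZMod 2 // x ≠ 0}) =>
        (∑ i, u.1 i * v.1 i) = 1) := by
  classical
  set V := {x : Fin k → ZMod 2 // x ≠ 0} with hV
  set E : V → V → Prop := fun u v => (∑ i, u.1 i * v.1 i) = 1 with hEdef
  obtain ⟨r0, ls0, lp0, h0⟩ := exists_labeling E
  unfold bReadability
  apply le_csInf
  · exact ⟨r0, ls0, lp0, h0⟩
  rintro r ⟨ls, lp, hlens, hlenp, hiff⟩
  -- symmetry of E
  have Esymm : ∀ a b : V, E a b ↔ E b a := by
    intro a b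
    rw [hEdef]
    simp only
    constructor <;> intro h <;>
      [skip; skip] <;>
      · rw [← h]
        exact Finset.sum_congr rfl fun i _ => mul_comm _ _
  -- minimum overlap weight
  set w : V → V → ℕ := fun u v => sInf {i | OverlapsBy (ls u) (lp v) i} with hwdef
  have hov : ∀ u v, E u v → OverlapsBy (ls u) (lp v) (w u v) := by
    intro u v h
    exact Nat.sInf_mem ((hiff u v).1 h)
  have hw1 : ∀ u v, E u v → 1 ≤ w u v := fun u v h => (hov u v h).1
  have hwr : ∀ u v, E u v → w u v ≤ r := by
    intro u v h
    have := (hov u v h).2.1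
    rw [hlens, hlenp, min_self] at this
    exact this
  have htake : ∀ u v, E u v → (ls u).drop (r - w u v) = (lp v).take (w u v) := by
    intro u v h
    have := (hov u v h).2.2
    rwa [hlens] at this
  -- two distinguished vertices
  have h1k : (1 : ℕ) < k := by omega
  set i0 : Fin k := ⟨0, by omega⟩ with hi0
  set i1 : Fin k := ⟨1, by omega⟩ with hi1
  set u0 : V := ⟨fun i => if i = i0 then 1 else 0, by
    intro h
    have := congrFun h i0
    simp at this⟩ with hu0
  set p2 : V := ⟨fun i => if i = i0 ∨ i = i1 then 1 else 0, by
    intro h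
    have := congrFun h i0
    simp at this⟩ with hp2
  have hdot0 : ∀ x : V, (∑ i, u0.1 i * x.1 i) = x.1 i0 := by
    intro x
    rw [hu0]
    rw [Finset.sum_eq_single i0]
    · simp
    · intro b _ hb
      simp [hb]
    · intro h
      exact absurd (Finset.mem_univ i0) h
  have hE00 : E u0 u0 := by
    rw [hEdef]
    simp only
    rw [hdot0 u0, hu0]
    simp
  have hE02 : E u0 p2 := by
    rw [hEdef]
    simp only
    rw [hdot0 p2, hp2]
    simp
  have h0ne2 : u0 ≠ p2 := by
    intro h
    rw [hu0, hp2] at h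
    have := congrFun (congrArg Subtype.val h) i1
    have hne : i1 ≠ i0 := by
      rw [hi0, hi1]
      intro hc
      have := congrArg Fin.val hc
      simp at this
    simp [hne] at this
  have hr1 : 1 ≤ r := le_trans (hw1 u0 u0 hE00) (hwr u0 u0 hE00)
  -- degree-2 levels
  set Deg2 : ℕ → Prop := fun i =>
    (∃ s q1 q2 : V, q1 ≠ q2 ∧ E s q1 ∧ E s q2 ∧ w s q1 = i ∧ w s q2 = i) ∨
    (∃ q s1 s2 : V, s1 ≠ s2 ∧ E s1 q ∧ E s2 q ∧ w s1 q = i ∧ w s2 q = i) with hDeg2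
  set D : Finset ℕ := (Finset.range (r + 1)).filter Deg2 with hD
  -- main claim
  have hclaim : ∃ q1 q2 : V, q1 ≠ q2 ∧
      (Finset.univ.filter fun p => E q1 p ∧ ¬ E q2 p).card ≤ r - 1 := by
    by_cases hDne : D.Nonempty
    · set i := D.max' hDne with hidef
      have himem : i ∈ (Finset.range (r + 1)).filter Deg2 := D.max'_mem hDne
      rw [Finset.mem_filter, Finset.mem_range] at himem
      have hir : i ≤ r := by omega
      have hmax : ∀ j, j ≤ r → Deg2 j → j ≤ i := by
        intro j hj hdj
        exact D.le_max' j
          (show j ∈ (Finset.range (r + 1)).filter Deg2 from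
            Finset.mem_filter.2 ⟨Finset.mem_range.2 (by omega), hdj⟩)
      rcases himem.2 with ⟨s, q1, q2, hq, e1, e2, hwa, hwb⟩ | ⟨q, s1, s2, hs, e1, e2, hwa, hwb⟩
      · -- q1, q2 have prefix-agreement up to i
        have hi1 : 1 ≤ i := hwa ▸ hw1 s q1 e1
        have ht : (lp q1).take i = (lp q2).take i := by
          have t1 := htake s q1 e1; rw [hwa] at t1
          have t2 := htake s q2 e2; rw [hwb] at t2
          rw [← t1, ← t2]
        refine ⟨q1, q2, hq, ?_⟩
        have hconv : (Finset.univ.filter fun p : V => E q1 p ∧ ¬ E q2 p) =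
            (Finset.univ.filter fun p : V => E p q1 ∧ ¬ E p q2) := by
          apply Finset.filter_congr
          intro p _
          rw [Esymm q1 p, Esymm q2 p]
        rw [hconv]
        have hbig : ∀ x : V, E x q1 → ¬ E x q2 → i + 1 ≤ w x q1 := by
          intro x hx1 hx2
          by_contra hcon
          push_neg at hcon
          have hji : w x q1 ≤ i := by omega
          have hovx := hov x q1 hx1
          have : OverlapsBy (ls x) (lp q2) (w x q1) :=
            (overlaps_congr_take (by rw [hlenp, hlenp]) ht hji).1 hovx
          exact hx2 ((hiff x q2).2 ⟨_, this⟩)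
        calc (Finset.univ.filter fun p : V => E p q1 ∧ ¬ E p q2).card
            ≤ (Finset.Icc (i + 1) r).card := by
              apply Finset.card_le_card_of_injOn (fun x => w x q1)
              · intro x hx
                rw [Finset.mem_coe, Finset.mem_filter] at hx
                rw [Finset.mem_coe, Finset.mem_Icc]
                exact ⟨hbig x hx.2.1 hx.2.2, hwr x q1 hx.2.1⟩
              · intro x hx y hy hxy
                simp only [Finset.coe_filter, Set.mem_setOf_eq] at hx hy
                by_contra hne'
                have hdj : Deg2 (w x q1) := Or.inr ⟨q1, x, y, hne', hx.2.1, hy.2.1, rfl, hxy.symm⟩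
                have hle := hmax _ (hwr x q1 hx.2.1) hdj
                have := hbig x hx.2.1 hx.2.2
                omega
          _ = r - i := by rw [Nat.card_Icc]; omega
          _ ≤ r - 1 := by omega
      · -- s1, s2 have suffix-agreement up to i
        have hi1 : 1 ≤ i := hwa ▸ hw1 s1 q e1
        have hd : (ls s1).drop (r - i) = (ls s2).drop (r - i) := by
          have t1 := htake s1 q e1; rw [hwa] at t1
          have t2 := htake s2 q e2; rw [hwb] at t2
          rw [t1, t2]
        refine ⟨s1, s2, hs, ?_⟩
        have hbig : ∀ y : V, E s1 y → ¬ E s2 y → i + 1 ≤ w s1 y := by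
          intro y hy1 hy2
          by_contra hcon
          push_neg at hcon
          have hji : w s1 y ≤ i := by omega
          have hovy := hov s1 y hy1
          have : OverlapsBy (ls s2) (lp y) (w s1 y) :=
            (overlaps_congr_drop (hlens s1) (hlens s2) hd hji hir).1 hovy
          exact hy2 ((hiff s2 y).2 ⟨_, this⟩)
        calc (Finset.univ.filter fun p : V => E s1 p ∧ ¬ E s2 p).card
            ≤ (Finset.Icc (i + 1) r).card := by
              apply Finset.card_le_card_of_injOn (fun y => w s1 y)
              · intro y hy
                rw [Finset.mem_coe, Finset.mem_filter] at hy
                rw [Finset.mem_coe, Finset.mem_Icc]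
                exact ⟨hbig y hy.2.1 hy.2.2, hwr s1 y hy.2.1⟩
              · intro x hx y hy hxy
                simp only [Finset.coe_filter, Set.mem_setOf_eq] at hx hy
                by_contra hne'
                have hdj : Deg2 (w s1 x) := Or.inl ⟨s1, x, y, hne', hx.2.1, hy.2.1, rfl, hxy.symm⟩
                have hle := hmax _ (hwr s1 x hx.2.1) hdj
                have := hbig x hx.2.1 hx.2.2
                omega
          _ = r - i := by rw [Nat.card_Icc]; omega
          _ ≤ r - 1 := by omega
    · -- no level has a vertex of degree two
      have hnone : ∀ j, j ≤ r → ¬ Deg2 j := by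
        intro j hj hdj
        exact hDne ⟨j, show j ∈ (Finset.range (r + 1)).filter Deg2 from
          Finset.mem_filter.2 ⟨Finset.mem_range.2 (by omega), hdj⟩⟩
      refine ⟨u0, p2, h0ne2, ?_⟩
      have hconv : (Finset.univ.filter fun p : V => E u0 p ∧ ¬ E p2 p) =
          (Finset.univ.filter fun p : V => E p u0 ∧ ¬ E p p2) := by
        apply Finset.filter_congr
        intro p _
        rw [Esymm u0 p, Esymm p2 p]
      rw [hconv]
      set j0 := w u0 u0 with hj0
      have hj0mem : j0 ∈ Finset.Icc 1 r := by
        rw [Finset.mem_Icc]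
        exact ⟨hw1 u0 u0 hE00, hwr u0 u0 hE00⟩
      have hgood : ∀ x : V, E x u0 → ¬ E x p2 → w x u0 ∈ Finset.Icc 1 r \ {j0} := by
        intro x hx1 hx2
        rw [Finset.mem_sdiff, Finset.mem_Icc, Finset.mem_singleton]
        refine ⟨⟨hw1 x u0 hx1, hwr x u0 hx1⟩, ?_⟩
        intro hcon
        have hxne : x ≠ u0 := by
          intro h
          rw [h] at hx2
          exact hx2 hE02
        have hdj : Deg2 j0 := Or.inr ⟨u0, x, u0, hxne, hx1, hE00, hcon, rfl⟩
        exact hnone j0 (Finset.mem_Icc.1 hj0mem).2 hdj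
      calc (Finset.univ.filter fun p : V => E p u0 ∧ ¬ E p p2).card
          ≤ (Finset.Icc 1 r \ {j0}).card := by
            apply Finset.card_le_card_of_injOn (fun x => w x u0)
            · intro x hx
              rw [Finset.mem_coe, Finset.mem_filter] at hx
              exact hgood x hx.2.1 hx.2.2
            · intro x hx y hy hxy
              simp only [Finset.coe_filter, Set.mem_setOf_eq] at hx hy
              by_contra hne'
              have hdj : Deg2 (w x u0) := Or.inr ⟨u0, x, y, hne', hx.2.1, hy.2.1, rfl, hxy.symm⟩
              exact hnone _ (hwr x u0 hx.2.1) hdj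
        _ = r - 1 := by
            rw [Finset.card_sdiff_of_subset (Finset.singleton_subset_iff.2 hj0mem), Nat.card_Icc,
              Finset.card_singleton]
            omega
  -- conclude via the Hadamard counting bound
  obtain ⟨q1, q2, hne, hcard⟩ := hclaim
  have hgecard := card_pattern_subtype hk q1 q2 hne
  have hEfilter : (Finset.univ.filter fun p : V =>
      (∑ i, q1.1 i * p.1 i) = 1 ∧ ¬ (∑ i, q2.1 i * p.1 i) = 1) =
      (Finset.univ.filter fun p : V => E q1 p ∧ ¬ E q2 p) := by
    rfl
  rw [hEfilter] at hgecard
  have hpow : 1 ≤ 2 ^ (k - 2) := Nat.one_le_two_pow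
  omega


end Readability
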